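/- Let V ⊆ ℝ³ be open, let f : V → ℝ be a regular function (continuous and in each coordinate strictly monotone or constant), and let τ(■) ⊆ V be a closed ball with boundary sphere τ(□). Then π_{3,4}({(x,y,z,v) : (x,y,z) ∈ τ(■), v = f(x,y,z)}) = π_{3,4}({(x,y,z,v) : (x,y,z) ∈ τ(□), v = f(x,y,z)}), where π_{3,4}(x,y,z,v) = (z,v). -/

import Mathlib

open Set

/-- A function is regular on `A` if it is continuous on `A` and, in each
coordinate (with the other coordinates fixed), strictly increasing, strictly
decreasing, or constant. -/
def RegularOn {n : ℕ} (f : (Fin n → ℝ) → ℝ) (A : Set (Fin n → ℝ)) : Prop :=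
  ContinuousOn f A ∧
  ∀ i : Fin n,
    (∀ x ∈ A, ∀ y ∈ A, (∀ j, j ≠ i → x j = y j) → x i < y i → f x < f y) ∨
    (∀ x ∈ A, ∀ y ∈ A, (∀ j, j ≠ i → x j = y j) → x i < y i → f y < f x) ∨
    (∀ x ∈ A, ∀ y ∈ A, (∀ j, j ≠ i → x j = y j) → f x = f y)

noncomputable def circPt (c0 c1 z s e : ℝ) (θ : ℝ) : EuclideanSpace ℝ (Fin 3) :=
  (EuclideanSpace.equiv (Fin 3) ℝ).symm ![c0 + s * Real.cos θ, c1 + e * s * Real.sin θ, z]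

lemma circPt_cont (c0 c1 z s e : ℝ) : Continuous (circPt c0 c1 z s e) := by
  unfold circPt
  refine (EuclideanSpace.equiv (Fin 3) ℝ).symm.continuous.comp ?_
  refine continuous_pi fun i => ?_
  fin_cases i <;> simp <;> fun_prop

lemma dist3 (x y : EuclideanSpace ℝ (Fin 3)) :
    dist x y = Real.sqrt ((x 0 - y 0)^2 + (x 1 - y 1)^2 + (x 2 - y 2)^2) := by
  rw [EuclideanSpace.dist_eq]
  congr 1
  rw [Fin.sum_univ_three]
  simp [Real.dist_eq, sq_abs]

set_option maxHeartbeats 1000000 in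
lemma key (V : Set (EuclideanSpace ℝ (Fin 3))) (hVop : IsOpen V)
    (f : EuclideanSpace ℝ (Fin 3) → ℝ) (hf : RegularOn (fun x => f (WithLp.toLp 2 x)) (WithLp.toLp 2 ⁻¹' V))
    (c : EuclideanSpace ℝ (Fin 3)) (r : ℝ)
    (hball : Metric.closedBall c r ⊆ V)
    (p : EuclideanSpace ℝ (Fin 3)) (hp : p ∈ Metric.closedBall c r) :
    ∃ q ∈ Metric.sphere c r, q 2 = p 2 ∧ f q = f p := by
  set w := p 0 - c 0 with hw
  set u := p 1 - c 1 with hu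
  set d := p 2 - c 2 with hd
  have hr0 : 0 ≤ r := le_trans dist_nonneg (Metric.mem_closedBall.mp hp)
  have hple : w^2 + u^2 + d^2 ≤ r^2 := by
    have h1 : Real.sqrt (w^2 + u^2 + d^2) ≤ r := by
      rw [← dist3 p c]; exact Metric.mem_closedBall.mp hp
    nlinarith [Real.sq_sqrt (by positivity : (0:ℝ) ≤ w^2 + u^2 + d^2),
      Real.sqrt_nonneg (w^2 + u^2 + d^2)]
  set s := Real.sqrt (r^2 - d^2) with hsdef
  set t := Real.sqrt (r^2 - d^2 - u^2) with htdef
  have hs2 : s^2 = r^2 - d^2 := Real.sq_sqrt (by nlinarith [sq_nonneg w, sq_nonneg u])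
  have ht2 : t^2 = r^2 - d^2 - u^2 := Real.sq_sqrt (by nlinarith [sq_nonneg w])
  have hs0 : 0 ≤ s := Real.sqrt_nonneg _
  have ht0 : 0 ≤ t := Real.sqrt_nonneg _
  have hwt : w^2 ≤ t^2 := by nlinarith
  have hwt1 : -t ≤ w := by nlinarith [sq_nonneg (w + t)]
  have hwt2 : w ≤ t := by nlinarith [sq_nonneg (w - t)]
  have hts : t ≤ s := Real.sqrt_le_sqrt (by nlinarith [sq_nonneg u])
  rcases eq_or_lt_of_le hs0 with hs | hs
  · -- degenerate: p is on the sphere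
    have hseq : s = 0 := hs.symm
    have hrd : r^2 - d^2 = 0 := by rw [← hs2, hseq]; ring
    have hweq : w = 0 := by
      have h1 : w^2 ≤ 0 := by nlinarith [sq_nonneg u]
      nlinarith [sq_nonneg w]
    have hueq : u = 0 := by
      have h1 : u^2 ≤ 0 := by nlinarith [sq_nonneg w]
      nlinarith [sq_nonneg u]
    refine ⟨p, ?_, rfl, rfl⟩
    rw [Metric.mem_sphere, dist3, ← hw, ← hu, ← hd, hweq, hueq]
    have : d^2 = r^2 := by nlinarith
    rw [show (0:ℝ)^2 + 0^2 + d^2 = r^2 by rw [this]; ring]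
    exact Real.sqrt_sq hr0
  · -- main case
    set e : ℝ := if 0 ≤ u then 1 else -1 with hedef
    have he2 : e^2 = 1 := by rcases ite_eq_or_eq (0 ≤ u) (1:ℝ) (-1) with h | h <;>
      rw [hedef, h] <;> ring
    have heu : e * |u| = u := by
      rcases le_or_gt 0 u with h | h
      · rw [hedef, if_pos h, abs_of_nonneg h]; ring
      · rw [hedef, if_neg (not_le.mpr h), abs_of_neg h]; ring
    set θb := Real.arccos (t / s) with hθb
    have hts1 : t / s ≤ 1 := (div_le_one hs).mpr hts
    have hts0 : 0 ≤ t / s := div_nonneg ht0 hs0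
    have hcos : Real.cos θb = t / s := Real.cos_arccos (by linarith) hts1
    have hsin : s * Real.sin θb = |u| := by
      have hsinnn : 0 ≤ Real.sin θb := by
        rw [hθb, Real.sin_arccos]; positivity
      have hsq : (s * Real.sin θb)^2 = u^2 := by
        rw [hθb, Real.sin_arccos, mul_pow,
          Real.sq_sqrt (by nlinarith : (0:ℝ) ≤ 1 - (t/s)^2)]
        field_simp
        nlinarith
      calc s * Real.sin θb = Real.sqrt ((s * Real.sin θb)^2) :=
            (Real.sqrt_sq (mul_nonneg hs0 hsinnn)).symm
        _ = Real.sqrt (u^2) := by rw [hsq]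
        _ = |u| := Real.sqrt_sq_eq_abs u
    set γ := circPt (c 0) (c 1) (p 2) s e with hγ
    have hγ0 : ∀ θ, γ θ 0 = c 0 + s * Real.cos θ := fun θ => by simp [hγ, circPt]
    have hγ1 : ∀ θ, γ θ 1 = c 1 + e * s * Real.sin θ := fun θ => by simp [hγ, circPt]
    have hγ2 : ∀ θ, γ θ 2 = p 2 := fun θ => by simp [hγ, circPt]
    have hsph : ∀ θ, γ θ ∈ Metric.sphere c r := by
      intro θ
      rw [Metric.mem_sphere, dist3, hγ0, hγ1, hγ2, ← hd]
      have h1 : (c 0 + s * Real.cos θ - c 0)^2 + (c 1 + e * s * Real.sin θ - c 1)^2 + d^2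
          = r^2 := by
        have hpy := Real.sin_sq_add_cos_sq θ
        linear_combination s^2 * Real.sin θ^2 * he2 + hs2 + s^2 * hpy
      rw [h1]; exact Real.sqrt_sq hr0
    set a := γ (Real.pi - θb) with hadef
    set b := γ θb with hbdef
    have ha0 : a 0 = c 0 - t := by
      rw [hadef, hγ0, Real.cos_pi_sub, hcos]; field_simp; ring
    have hb0 : b 0 = c 0 + t := by
      rw [hbdef, hγ0, hcos]; field_simp
    have ha1 : a 1 = p 1 := by
      rw [hadef, hγ1, Real.sin_pi_sub, mul_assoc, hsin, heu, hu]; ring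
    have hb1 : b 1 = p 1 := by
      rw [hbdef, hγ1, mul_assoc, hsin, heu, hu]; ring
    have ha2 : a 2 = p 2 := hγ2 _
    have hb2 : b 2 = p 2 := hγ2 _
    have haV : a ∈ V := hball (Metric.sphere_subset_closedBall (hsph _))
    have hbV : b ∈ V := hball (Metric.sphere_subset_closedBall (hsph _))
    have hpV : p ∈ V := hball hp
    have hap : ∀ j, j ≠ (0 : Fin 3) → a j = p j := by
      intro j hj; fin_cases j
      · exact absurd rfl hj
      · exact ha1
      · exact ha2
    have hbp : ∀ j, j ≠ (0 : Fin 3) → p j = b j := by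
      intro j hj; fin_cases j
      · exact absurd rfl hj
      · exact hb1.symm
      · exact hb2.symm
    have ha0le : a 0 ≤ p 0 := by rw [ha0]; linarith [hwt1, (by rw [hw]; ring : p 0 = c 0 + w)]
    have hb0ge : p 0 ≤ b 0 := by rw [hb0]; linarith [hwt2, (by rw [hw]; ring : p 0 = c 0 + w)]
    have haeq : a 0 = p 0 → a = p := by
      intro h; ext j; fin_cases j
      · exact h
      · exact ha1
      · exact ha2
    have hbeq : p 0 = b 0 → p = b := by
      intro h; ext j; fin_cases j
      · exact h
      · exact hb1.symm
      · exact hb2.symm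
    have hcomp : (f a ≤ f p ∧ f p ≤ f b) ∨ (f b ≤ f p ∧ f p ≤ f a) := by
      rcases hf.2 0 with hm | hm | hm
      · left
        constructor
        · rcases eq_or_lt_of_le ha0le with h | h
          · rw [haeq h]
          · exact le_of_lt (hm a.ofLp haV p.ofLp hpV hap h)
        · rcases eq_or_lt_of_le hb0ge with h | h
          · rw [hbeq h]
          · exact le_of_lt (hm p.ofLp hpV b.ofLp hbV hbp h)
      · right
        constructor
        · rcases eq_or_lt_of_le hb0ge with h | h
          · rw [hbeq h]
          · exact le_of_lt (hm p.ofLp hpV b.ofLp hbV hbp h)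
        · rcases eq_or_lt_of_le ha0le with h | h
          · rw [haeq h]
          · exact le_of_lt (hm a.ofLp haV p.ofLp hpV hap h)
      · left
        exact ⟨le_of_eq (hm a.ofLp haV p.ofLp hpV hap), le_of_eq (hm p.ofLp hpV b.ofLp hbV hbp)⟩
    have hgcont : Continuous (fun θ => f (γ θ)) := by
      rw [continuous_iff_continuousAt]
      intro θ
      exact ContinuousAt.comp (g := fun x => f (WithLp.toLp 2 x)) (f := fun θ => (γ θ).ofLp)
        (hf.1.continuousAt (x := (γ θ).ofLp) ((hVop.preimage (PiLp.continuous_toLp 2 _)).mem_nhds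
        (hball (Metric.sphere_subset_closedBall (hsph θ)))))
        ((PiLp.continuous_ofLp 2 _).comp (circPt_cont _ _ _ _ _)).continuousAt
    have hiv := intermediate_value_uIcc (a := Real.pi - θb) (b := θb)
      (hgcont.continuousOn (s := uIcc (Real.pi - θb) θb))
    have hmem : f p ∈ uIcc (f (γ (Real.pi - θb))) (f (γ θb)) := by
      rw [mem_uIcc]
      rcases hcomp with ⟨h1, h2⟩ | ⟨h1, h2⟩
      · left; exact ⟨h1, h2⟩
      · right; exact ⟨h1, h2⟩
    obtain ⟨θ, _, hθ⟩ := hiv hmem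
    exact ⟨γ θ, hsph θ, hγ2 θ, hθ⟩

theorem stmt14 (V : Set (EuclideanSpace ℝ (Fin 3))) (hVop : IsOpen V)
    (f : EuclideanSpace ℝ (Fin 3) → ℝ) (hf : RegularOn (fun x => f (WithLp.toLp 2 x)) (WithLp.toLp 2 ⁻¹' V))
    (c : EuclideanSpace ℝ (Fin 3)) (r : ℝ) (hr : 0 < r)
    (hball : Metric.closedBall c r ⊆ V) :
    (fun q : EuclideanSpace ℝ (Fin 3) × ℝ => (q.1 2, q.2)) ''
        {q | q.1 ∈ Metric.closedBall c r ∧ q.2 = f q.1} =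
      (fun q : EuclideanSpace ℝ (Fin 3) × ℝ => (q.1 2, q.2)) ''
        {q | q.1 ∈ Metric.sphere c r ∧ q.2 = f q.1} := by
  apply Set.Subset.antisymm
  · rintro ⟨z, v⟩ ⟨⟨p, v'⟩, ⟨hp, hv⟩, h⟩
    simp only [Prod.mk.injEq] at h
    obtain ⟨q, hq, hq2, hqf⟩ := key V hVop f hf c r hball p hp
    refine ⟨(q, f q), ⟨hq, rfl⟩, ?_⟩
    simp only [Prod.mk.injEq]
    exact ⟨hq2.trans h.1, hqf.trans (hv ▸ h.2)⟩
  · rintro ⟨z, v⟩ ⟨⟨p, v'⟩, ⟨hp, hv⟩, h⟩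
    exact ⟨(p, v'), ⟨Metric.sphere_subset_closedBall hp, hv⟩, h⟩
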